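/- Let I = [0,a] with 0 < a < ∞ and let U : I → Set(V) assign to each t a bounded subset of a Banach space V such that the family U = {ξ : I → V : ξ(t) ∈ U(t)} is bounded and equicontinuous in C(I, V). Then for every τ ∈ I, the Hausdorff measure of noncompactness satisfies μ(∫₀^τ U(s) ds) ≤ ∫₀^τ μ(U(s)) ds, where ∫₀^τ U(s) ds = {∫₀^τ ξ(s) ds : ξ ∈ U} and each ξ is Bochner integrable. -/

import Mathlib

open Metric Set MeasureTheory Pointwise

/-- Hausdorff measure of noncompactness: infimum of ε > 0 such that B has a finite ε-net. -/
noncomputable def hausdorffMNC {X : Type*} [MetricSpace X] (B : Set X) : ℝ :=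
  sInf {ε : ℝ | 0 < ε ∧ ∃ F : Finset X, B ⊆ ⋃ x ∈ F, Metric.ball x ε}

namespace MNCAux

variable {X : Type*} [NormedAddCommGroup X]

def S (B : Set X) : Set ℝ := {ε : ℝ | 0 < ε ∧ ∃ F : Finset X, B ⊆ ⋃ x ∈ F, Metric.ball x ε}

lemma mnc_eq (B : Set X) : hausdorffMNC B = sInf (S B) := rfl

lemma bddBelow_S (B : Set X) : BddBelow (S B) := ⟨0, fun _ hε => hε.1.le⟩

lemma mem_S_of_norm_le {B : Set X} {M ε : ℝ} (h : ∀ x ∈ B, ‖x‖ ≤ M) (hM : M < ε)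
    (hε : 0 < ε) : ε ∈ S B := by
  refine ⟨hε, {0}, fun x hx => ?_⟩
  exact mem_iUnion₂.2 ⟨0, Finset.mem_singleton_self 0,
    mem_ball_zero_iff.2 (lt_of_le_of_lt (h x hx) hM)⟩

lemma S_nonempty_of_norm_le {B : Set X} {M : ℝ} (h : ∀ x ∈ B, ‖x‖ ≤ M) :
    (S B).Nonempty :=
  ⟨max M 0 + 1, mem_S_of_norm_le h (lt_of_le_of_lt (le_max_left _ _) (lt_add_one _))
    (by positivity)⟩

lemma mnc_nonneg (B : Set X) : 0 ≤ hausdorffMNC B :=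
  Real.sInf_nonneg fun _ hε => hε.1.le

lemma mnc_le_of_norm_le {B : Set X} {M : ℝ} (hM : 0 ≤ M) (h : ∀ x ∈ B, ‖x‖ ≤ M) :
    hausdorffMNC B ≤ M := by
  refine le_of_forall_pos_le_add fun ε hε => ?_
  exact csInf_le (bddBelow_S B) (mem_S_of_norm_le h (by linarith) (by linarith))

lemma mnc_le_add {A B : Set X} {δ : ℝ} (hδ : 0 ≤ δ)
    (hAB : ∀ x ∈ A, ∃ y ∈ B, dist x y ≤ δ) (hB : (S B).Nonempty) :
    hausdorffMNC A ≤ hausdorffMNC B + δ := by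
  rw [mnc_eq, mnc_eq]
  have h : ∀ ε ∈ S B, sInf (S A) ≤ ε + δ := by
    rintro ε ⟨hε, F, hF⟩
    refine csInf_le (bddBelow_S A) ⟨by linarith, F, fun x hx => ?_⟩
    obtain ⟨y, hyB, hxy⟩ := hAB x hx
    obtain ⟨z, hzF, hyz⟩ := mem_iUnion₂.1 (hF hyB)
    refine mem_iUnion₂.2 ⟨z, hzF, mem_ball.2 ?_⟩
    have h1 : dist y z < ε := mem_ball.1 hyz
    calc dist x z ≤ dist x y + dist y z := dist_triangle x y z
      _ < ε + δ := by linarith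
  have h2 : sInf (S A) - δ ≤ sInf (S B) :=
    le_csInf hB fun ε hε => by linarith [h ε hε]
  linarith

lemma mnc_mono {A B : Set X} (hAB : A ⊆ B) (hB : (S B).Nonempty) :
    hausdorffMNC A ≤ hausdorffMNC B := by
  have := mnc_le_add (le_refl (0:ℝ)) (fun x hx => ⟨x, hAB hx, by simp⟩) hB
  linarith

lemma mnc_smul_le [NormedSpace ℝ X] {B : Set X} {c : ℝ} (hc : 0 < c)
    (hB : (S B).Nonempty) : hausdorffMNC (c • B) ≤ c * hausdorffMNC B := by
  have h : ∀ ε ∈ S B, hausdorffMNC (c • B) ≤ c * ε := by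
    rintro ε ⟨hε, F, hF⟩
    classical
    refine csInf_le (bddBelow_S _) ⟨by positivity, F.image (c • ·), ?_⟩
    rintro _ ⟨x, hxB, rfl⟩
    obtain ⟨z, hzF, hxz⟩ := mem_iUnion₂.1 (hF hxB)
    refine mem_iUnion₂.2 ⟨c • z, Finset.mem_image_of_mem _ hzF, mem_ball.2 ?_⟩
    have : dist (c • x) (c • z) = ‖c‖ * dist x z := dist_smul₀ c x z
    rw [this, Real.norm_eq_abs, abs_of_pos hc]
    exact (mul_lt_mul_iff_right₀ hc).2 (mem_ball.1 hxz)
  have h2 : hausdorffMNC (c • B) / c ≤ sInf (S B) :=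
    le_csInf hB fun ε hε => (div_le_iff₀ hc).2 (by rw [mul_comm]; exact h ε hε)
  have h3 := mul_le_mul_of_nonneg_left h2 hc.le
  rw [mul_div_cancel₀ _ (ne_of_gt hc)] at h3
  exact h3

lemma mnc_add_le {A B : Set X} (hA : (S A).Nonempty) (hB : (S B).Nonempty) :
    hausdorffMNC (A + B) ≤ hausdorffMNC A + hausdorffMNC B := by
  simp only [mnc_eq]
  have h : ∀ εa ∈ S A, ∀ εb ∈ S B, sInf (S (A + B)) ≤ εa + εb := by
    rintro εa ⟨ha, Fa, hFa⟩ εb ⟨hb, Fb, hFb⟩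
    classical
    refine csInf_le (bddBelow_S _) ⟨by linarith, Fa + Fb, ?_⟩
    rintro _ ⟨x, hx, y, hy, rfl⟩
    obtain ⟨z, hzF, hxz⟩ := mem_iUnion₂.1 (hFa hx)
    obtain ⟨w, hwF, hyw⟩ := mem_iUnion₂.1 (hFb hy)
    refine mem_iUnion₂.2 ⟨z + w, Finset.add_mem_add hzF hwF, mem_ball.2 ?_⟩
    calc dist (x + y) (z + w) ≤ dist x z + dist y w := dist_add_add_le x y z w
      _ < εa + εb := add_lt_add (mem_ball.1 hxz) (mem_ball.1 hyw)
  have h1 : ∀ εb ∈ S B, sInf (S (A + B)) - εb ≤ sInf (S A) :=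
    fun εb hb => le_csInf hA fun εa ha => by linarith [h εa ha εb hb]
  have h2 : sInf (S (A + B)) - sInf (S A) ≤ sInf (S B) :=
    le_csInf hB fun εb hb => by linarith [h1 εb hb]
  linarith

end MNCAux

namespace MNCAux

variable {V : Type*} [NormedAddCommGroup V] [NormedSpace ℝ V]

lemma mnc_riemann_sum_le (H : Set (ℝ → V)) {M : ℝ}
    (t : ℕ → ℝ) {Δ : ℝ} (hΔ : 0 < Δ) :
    ∀ n : ℕ, (∀ ξ ∈ H, ∀ i < n, ‖ξ (t i)‖ ≤ M) →
    hausdorffMNC {y : V | ∃ ξ ∈ H, y = ∑ i ∈ Finset.range n, Δ • ξ (t i)} ≤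
      ∑ i ∈ Finset.range n, Δ * hausdorffMNC {v : V | ∃ ξ ∈ H, ξ (t i) = v} := by
  intro n
  induction n with
  | zero =>
      intro _
      simp only [Finset.range_zero, Finset.sum_empty]
      refine mnc_le_of_norm_le le_rfl ?_
      rintro x ⟨ξ, hξ, rfl⟩; simp
  | succ n ih0 =>
      intro hbd0
      have hbd : ∀ ξ ∈ H, ∀ i ≤ n, ‖ξ (t i)‖ ≤ M := fun ξ hξ i hi =>
        hbd0 ξ hξ i (Nat.lt_succ_of_le hi)
      have ih := ih0 fun ξ hξ i hi => hbd ξ hξ i hi.le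
      set A : Set V := {y : V | ∃ ξ ∈ H, y = ∑ i ∈ Finset.range n, Δ • ξ (t i)} with hAdef
      set U : ℕ → Set V := fun i => {v : V | ∃ ξ ∈ H, ξ (t i) = v} with hUdef
      have hA : ∀ y ∈ A, ‖y‖ ≤ n * (Δ * M) := by
        rintro _ ⟨ξ, hξ, rfl⟩
        calc ‖∑ i ∈ Finset.range n, Δ • ξ (t i)‖
            ≤ ∑ i ∈ Finset.range n, ‖Δ • ξ (t i)‖ := norm_sum_le _ _
          _ ≤ ∑ _i ∈ Finset.range n, Δ * M := by
              refine Finset.sum_le_sum fun i _ => ?_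
              rw [norm_smul, Real.norm_eq_abs, abs_of_pos hΔ]
              exact mul_le_mul_of_nonneg_left (hbd ξ hξ i (Finset.mem_range.1 ‹i ∈ Finset.range n›).le) hΔ.le
          _ = n * (Δ * M) := by rw [Finset.sum_const, Finset.card_range, nsmul_eq_mul]
      have hU : ∀ i ≤ n, ∀ v ∈ U i, ‖v‖ ≤ M := by
        rintro i hi _ ⟨ξ, hξ, rfl⟩; exact hbd ξ hξ i hi
      have hUs : ∀ v ∈ Δ • U n, ‖v‖ ≤ Δ * M := by
        rintro _ ⟨v, hv, rfl⟩
        rw [norm_smul, Real.norm_eq_abs, abs_of_pos hΔ]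
        exact mul_le_mul_of_nonneg_left (hU n le_rfl v hv) hΔ.le
      have hsum_bd : ∀ y ∈ A + Δ • U n, ‖y‖ ≤ n * (Δ * M) + Δ * M := by
        rintro _ ⟨x, hx, y, hy, rfl⟩
        exact (norm_add_le _ _).trans (add_le_add (hA x hx) (hUs y hy))
      have hsub : {y : V | ∃ ξ ∈ H, y = ∑ i ∈ Finset.range (n+1), Δ • ξ (t i)} ⊆
          A + Δ • U n := by
        rintro _ ⟨ξ, hξ, rfl⟩
        rw [Finset.sum_range_succ]
        exact ⟨_, ⟨ξ, hξ, rfl⟩, Δ • ξ (t n), ⟨ξ (t n), ⟨ξ, hξ, rfl⟩, rfl⟩, rfl⟩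
      calc hausdorffMNC {y : V | ∃ ξ ∈ H, y = ∑ i ∈ Finset.range (n+1), Δ • ξ (t i)}
          ≤ hausdorffMNC (A + Δ • U n) :=
            mnc_mono hsub (S_nonempty_of_norm_le hsum_bd)
        _ ≤ hausdorffMNC A + hausdorffMNC (Δ • U n) :=
            mnc_add_le (S_nonempty_of_norm_le hA) (S_nonempty_of_norm_le hUs)
        _ ≤ hausdorffMNC A + Δ * hausdorffMNC (U n) := by
            have := mnc_smul_le hΔ (S_nonempty_of_norm_le (hU n le_rfl))
            linarith
        _ ≤ ∑ i ∈ Finset.range (n+1), Δ * hausdorffMNC (U i) := by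
            rw [Finset.sum_range_succ]
            exact add_le_add ih le_rfl

end MNCAux



/-- For a bounded equicontinuous family `H` of functions on `[0,a]`, the MNC of the
set-valued integral is bounded by the integral of the pointwise MNC. -/
theorem hausdorffMNC_set_integral_le {V : Type*} [NormedAddCommGroup V]
    [NormedSpace ℝ V] [CompleteSpace V] [SecondCountableTopology V]
    [MeasurableSpace V] [BorelSpace V]
    (a : ℝ) (ha : 0 < a) (H : Set (ℝ → V))
    (hcont : ∀ ξ ∈ H, ContinuousOn ξ (Icc 0 a))
    (hbdd : ∃ M : ℝ, ∀ ξ ∈ H, ∀ t ∈ Icc 0 a, ‖ξ t‖ ≤ M)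
    (hequi : EquicontinuousOn (fun ξ : H => (ξ : ℝ → V)) (Icc 0 a))
    (hint : ∀ ξ ∈ H, IntegrableOn ξ (Icc 0 a)) :
    ∀ τ ∈ Icc 0 a,
      hausdorffMNC {y : V | ∃ ξ ∈ H, y = ∫ s in (0:ℝ)..τ, ξ s} ≤
        ∫ s in (0:ℝ)..τ, hausdorffMNC {v : V | ∃ ξ ∈ H, ξ s = v} := by
  classical
  obtain ⟨M, hM⟩ := hbdd
  -- uniform equicontinuity on the compact interval
  have hueq : ∀ ε > 0, ∃ δ > 0, ∀ s ∈ Icc (0:ℝ) a, ∀ u ∈ Icc (0:ℝ) a,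
      |s - u| < δ → ∀ ξ ∈ H, ‖ξ s - ξ u‖ < ε := by
    intro ε hε
    haveI : CompactSpace (Icc (0:ℝ) a) := isCompact_iff_compactSpace.mp isCompact_Icc
    have h1 : Equicontinuous ((Icc (0:ℝ) a).restrict ∘ (fun ξ : H => (ξ : ℝ → V))) :=
      (equicontinuous_restrict_iff _).2 hequi
    have h2 := CompactSpace.uniformEquicontinuous_of_equicontinuous h1
    rw [Metric.uniformEquicontinuous_iff] at h2
    obtain ⟨δ, hδ, hd⟩ := h2 ε hε
    refine ⟨δ, hδ, fun s hs u hu hsu ξ hξ => ?_⟩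
    have := hd ⟨s, hs⟩ ⟨u, hu⟩ (by simpa [Subtype.dist_eq, Real.dist_eq] using hsu) ⟨ξ, hξ⟩
    simpa [Function.comp, Set.restrict, dist_eq_norm] using this
  intro τ hτ
  obtain ⟨hτ0, hτa⟩ := hτ
  set M' := max M 0 with hM'def
  have hM'0 : (0:ℝ) ≤ M' := le_max_right _ _
  have hMle : ∀ ξ ∈ H, ∀ s ∈ Icc (0:ℝ) a, ‖ξ s‖ ≤ M' :=
    fun ξ hξ s hs => (hM ξ hξ s hs).trans (le_max_left _ _)
  set g : ℝ → ℝ := fun s => hausdorffMNC {v : V | ∃ ξ ∈ H, ξ s = v} with hgdef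
  have hUbd : ∀ s ∈ Icc (0:ℝ) a, ∀ v ∈ {v : V | ∃ ξ ∈ H, ξ s = v}, ‖v‖ ≤ M' := by
    rintro s hs _ ⟨ξ, hξ, rfl⟩; exact hMle ξ hξ s hs
  -- modulus of continuity for g
  have hgmod : ∀ ε > 0, ∃ δ > 0, ∀ s ∈ Icc (0:ℝ) a, ∀ u ∈ Icc (0:ℝ) a,
      |s - u| < δ → |g s - g u| ≤ ε := by
    intro ε hε
    obtain ⟨δ, hδ, hd⟩ := hueq ε hε
    refine ⟨δ, hδ, fun s hs u hu hsu => ?_⟩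
    have h1 : g s ≤ g u + ε := by
      refine MNCAux.mnc_le_add hε.le ?_ (MNCAux.S_nonempty_of_norm_le (hUbd u hu))
      rintro _ ⟨ξ, hξ, rfl⟩
      exact ⟨ξ u, ⟨ξ, hξ, rfl⟩, by
        rw [dist_eq_norm]; exact (hd s hs u hu hsu ξ hξ).le⟩
    have h2 : g u ≤ g s + ε := by
      refine MNCAux.mnc_le_add hε.le ?_ (MNCAux.S_nonempty_of_norm_le (hUbd s hs))
      rintro _ ⟨ξ, hξ, rfl⟩
      refine ⟨ξ s, ⟨ξ, hξ, rfl⟩, ?_⟩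
      rw [dist_eq_norm]
      exact (hd u hu s hs (by rwa [abs_sub_comm] at hsu) ξ hξ).le
    rw [abs_le]; constructor <;> linarith
  -- continuity of g
  have hgc : ContinuousOn g (Icc (0:ℝ) a) := by
    rw [Metric.continuousOn_iff]
    intro b hb ε hε
    obtain ⟨δ, hδ, hd⟩ := hgmod (ε/2) (half_pos hε)
    refine ⟨δ, hδ, fun s hs hsb => ?_⟩
    rw [Real.dist_eq] at hsb ⊢
    exact lt_of_le_of_lt (hd s hs b hb hsb) (half_lt_self hε)
  -- case τ = 0
  rcases eq_or_lt_of_le hτ0 with h0 | hτpos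
  · subst h0
    rw [intervalIntegral.integral_same]
    refine MNCAux.mnc_le_of_norm_le le_rfl ?_
    rintro _ ⟨ξ, hξ, rfl⟩
    simp [intervalIntegral.integral_same]
  -- main case τ > 0
  refine le_of_forall_pos_le_add fun ε hε => ?_
  set ε' := ε / (2 * τ) with hε'def
  have hε'pos : 0 < ε' := by positivity
  obtain ⟨δ, hδ, hd⟩ := hueq ε' hε'pos
  -- g-modulus with this δ
  have hgd : ∀ s ∈ Icc (0:ℝ) a, ∀ u ∈ Icc (0:ℝ) a, |s - u| < δ → |g s - g u| ≤ ε' := by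
    intro s hs u hu hsu
    have h1 : g s ≤ g u + ε' := by
      refine MNCAux.mnc_le_add hε'pos.le ?_ (MNCAux.S_nonempty_of_norm_le (hUbd u hu))
      rintro _ ⟨ξ, hξ, rfl⟩
      exact ⟨ξ u, ⟨ξ, hξ, rfl⟩, by
        rw [dist_eq_norm]; exact (hd s hs u hu hsu ξ hξ).le⟩
    have h2 : g u ≤ g s + ε' := by
      refine MNCAux.mnc_le_add hε'pos.le ?_ (MNCAux.S_nonempty_of_norm_le (hUbd s hs))
      rintro _ ⟨ξ, hξ, rfl⟩
      refine ⟨ξ s, ⟨ξ, hξ, rfl⟩, ?_⟩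
      rw [dist_eq_norm]
      exact (hd u hu s hs (by rwa [abs_sub_comm] at hsu) ξ hξ).le
    rw [abs_le]; constructor <;> linarith
  obtain ⟨n, hn⟩ := exists_nat_gt (τ / δ)
  have hn0 : 0 < n := by
    have h1 : 0 < τ / δ := div_pos hτpos hδ
    exact_mod_cast lt_trans h1 hn
  have hnR : (0:ℝ) < n := Nat.cast_pos.2 hn0
  set Δ : ℝ := τ / n with hΔdef
  have hΔpos : 0 < Δ := div_pos hτpos hnR
  have hnΔ : (n:ℝ) * Δ = τ := by rw [hΔdef]; field_simp [hnR.ne']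
  have hΔδ : Δ < δ := by
    rw [hΔdef, div_lt_iff₀ hnR]
    have := (div_lt_iff₀ hδ).1 hn
    linarith [mul_comm δ (n:ℝ)]
  set t : ℕ → ℝ := fun i => i * Δ with htdef
  have ht0 : t 0 = 0 := by simp [htdef]
  have htn : t n = τ := by rw [htdef]; exact hnΔ
  have htstep : ∀ i : ℕ, t (i+1) - t i = Δ := by
    intro i; simp only [htdef]; push_cast; ring
  have htle : ∀ i : ℕ, t i ≤ t (i+1) := fun i => by
    have := htstep i; linarith
  have htmem : ∀ i ≤ n, t i ∈ Icc (0:ℝ) a := by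
    intro i hi
    constructor
    · have : (0:ℝ) ≤ (i:ℝ) * Δ := by positivity
      simpa [htdef] using this
    · have h1 : (i:ℝ) * Δ ≤ (n:ℝ) * Δ :=
        mul_le_mul_of_nonneg_right (Nat.cast_le.2 hi) hΔpos.le
      have : t i ≤ τ := by rw [htdef]; simpa [hnΔ] using h1
      linarith
  -- integrability of ξ on subintervals
  have hIntξ : ∀ ξ ∈ H, ∀ i < n, IntervalIntegrable ξ volume (t i) (t (i+1)) := by
    intro ξ hξ i hi
    refine ContinuousOn.intervalIntegrable ?_
    refine (hcont ξ hξ).mono ?_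
    rw [uIcc_of_le (htle i)]
    exact Icc_subset_Icc (htmem i hi.le).1 (htmem (i+1) hi).2
  have hIntg : ∀ i < n, IntervalIntegrable g volume (t i) (t (i+1)) := by
    intro i hi
    refine ContinuousOn.intervalIntegrable ?_
    refine hgc.mono ?_
    rw [uIcc_of_le (htle i)]
    exact Icc_subset_Icc (htmem i hi.le).1 (htmem (i+1) hi).2
  -- distance between the integral and the Riemann sum
  have hclose : ∀ ξ ∈ H,
      ‖(∫ s in (0:ℝ)..τ, ξ s) - ∑ i ∈ Finset.range n, Δ • ξ (t (i+1))‖ ≤ τ * ε' := by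
    intro ξ hξ
    have hsplit := intervalIntegral.sum_integral_adjacent_intervals
      (fun i hi => hIntξ ξ hξ i hi)
    rw [ht0, htn] at hsplit
    rw [← hsplit, ← Finset.sum_sub_distrib]
    refine (norm_sum_le _ _).trans ?_
    have hterm : ∀ i ∈ Finset.range n,
        ‖(∫ s in t i..t (i+1), ξ s) - Δ • ξ (t (i+1))‖ ≤ Δ * ε' := by
      intro i hi
      rw [Finset.mem_range] at hi
      have heq : Δ • ξ (t (i+1)) = ∫ _s in t i..t (i+1), ξ (t (i+1)) := by
        rw [intervalIntegral.integral_const, htstep i]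
      rw [heq, ← intervalIntegral.integral_sub (hIntξ ξ hξ i hi) intervalIntegrable_const]
      have hbound : ∀ s ∈ Set.uIoc (t i) (t (i+1)), ‖ξ s - ξ (t (i+1))‖ ≤ ε' := by
        intro s hs
        rw [uIoc_of_le (htle i)] at hs
        have hsI : s ∈ Icc (0:ℝ) a :=
          ⟨le_trans (htmem i hi.le).1 hs.1.le, le_trans hs.2 (htmem (i+1) hi).2⟩
        have hdist : |s - t (i+1)| < δ := by
          rw [abs_sub_lt_iff]
          constructor
          · linarith [hs.2, htstep i]
          · linarith [hs.1, htstep i]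
        exact (hd s hsI (t (i+1)) (htmem (i+1) hi) hdist ξ hξ).le
      have h2 := intervalIntegral.norm_integral_le_of_norm_le_const hbound
      calc ‖∫ s in t i..t (i+1), (ξ s - ξ (t (i+1)))‖ ≤ ε' * |t (i+1) - t i| := h2
        _ = Δ * ε' := by rw [htstep i, abs_of_pos hΔpos, mul_comm]
    calc ∑ i ∈ Finset.range n, ‖(∫ s in t i..t (i+1), ξ s) - Δ • ξ (t (i+1))‖
        ≤ ∑ _i ∈ Finset.range n, Δ * ε' := Finset.sum_le_sum hterm
      _ = (n:ℝ) * (Δ * ε') := by rw [Finset.sum_const, Finset.card_range, nsmul_eq_mul]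
      _ = τ * ε' := by rw [← mul_assoc, hnΔ]
  -- Riemann sum set
  set R : Set V := {y : V | ∃ ξ ∈ H, y = ∑ i ∈ Finset.range n, Δ • ξ (t (i+1))} with hRdef
  have hRbd : ∀ y ∈ R, ‖y‖ ≤ (n:ℝ) * (Δ * M') := by
    rintro _ ⟨ξ, hξ, rfl⟩
    calc ‖∑ i ∈ Finset.range n, Δ • ξ (t (i+1))‖
        ≤ ∑ i ∈ Finset.range n, ‖Δ • ξ (t (i+1))‖ := norm_sum_le _ _
      _ ≤ ∑ _i ∈ Finset.range n, Δ * M' := by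
          refine Finset.sum_le_sum fun i hi => ?_
          rw [Finset.mem_range] at hi
          rw [norm_smul, Real.norm_eq_abs, abs_of_pos hΔpos]
          exact mul_le_mul_of_nonneg_left (hMle ξ hξ _ (htmem (i+1) hi)) hΔpos.le
      _ = (n:ℝ) * (Δ * M') := by rw [Finset.sum_const, Finset.card_range, nsmul_eq_mul]
  have step1 : hausdorffMNC {y : V | ∃ ξ ∈ H, y = ∫ s in (0:ℝ)..τ, ξ s} ≤
      hausdorffMNC R + τ * ε' := by
    refine MNCAux.mnc_le_add (by positivity) ?_ (MNCAux.S_nonempty_of_norm_le hRbd)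
    rintro _ ⟨ξ, hξ, rfl⟩
    refine ⟨∑ i ∈ Finset.range n, Δ • ξ (t (i+1)), ⟨ξ, hξ, rfl⟩, ?_⟩
    rw [dist_eq_norm]
    exact hclose ξ hξ
  have step2 : hausdorffMNC R ≤ ∑ i ∈ Finset.range n, Δ * g (t (i+1)) := by
    have := MNCAux.mnc_riemann_sum_le H (fun i => t (i+1)) hΔpos n
      (fun ξ hξ i hi => hMle ξ hξ _ (htmem (i+1) hi))
    exact this
  -- comparing the Riemann sum of g with the integral of g
  have hsplitg := intervalIntegral.sum_integral_adjacent_intervals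
    (fun i hi => hIntg i hi)
  rw [ht0, htn] at hsplitg
  have step3 : ∑ i ∈ Finset.range n, Δ * g (t (i+1)) ≤
      (∫ s in (0:ℝ)..τ, g s) + τ * ε' := by
    have hterm : ∀ i ∈ Finset.range n,
        Δ * g (t (i+1)) ≤ (∫ s in t i..t (i+1), g s) + Δ * ε' := by
      intro i hi
      rw [Finset.mem_range] at hi
      have hmono : (∫ _s in t i..t (i+1), (g (t (i+1)) - ε')) ≤
          ∫ s in t i..t (i+1), g s := by
        refine intervalIntegral.integral_mono_on (htle i)
          intervalIntegrable_const (hIntg i hi) ?_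
        intro s hs
        have hsI : s ∈ Icc (0:ℝ) a :=
          ⟨le_trans (htmem i hi.le).1 hs.1, le_trans hs.2 (htmem (i+1) hi).2⟩
        have hdist : |s - t (i+1)| < δ := by
          rw [abs_sub_lt_iff]
          constructor
          · linarith [hs.2, htstep i]
          · linarith [hs.1, htstep i, htle i]
        have := hgd s hsI (t (i+1)) (htmem (i+1) hi) hdist
        rw [abs_le] at this
        linarith [this.1, this.2]
      rw [intervalIntegral.integral_const, htstep i, smul_eq_mul] at hmono
      nlinarith [hmono]
    calc ∑ i ∈ Finset.range n, Δ * g (t (i+1))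
        ≤ ∑ i ∈ Finset.range n, ((∫ s in t i..t (i+1), g s) + Δ * ε') :=
          Finset.sum_le_sum hterm
      _ = (∫ s in (0:ℝ)..τ, g s) + (n:ℝ) * (Δ * ε') := by
          rw [Finset.sum_add_distrib, hsplitg, Finset.sum_const, Finset.card_range,
            nsmul_eq_mul]
      _ = (∫ s in (0:ℝ)..τ, g s) + τ * ε' := by rw [← mul_assoc, hnΔ]
  have hfinal : τ * ε' + τ * ε' = ε := by
    rw [hε'def]; field_simp; ring
  calc hausdorffMNC {y : V | ∃ ξ ∈ H, y = ∫ s in (0:ℝ)..τ, ξ s}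
      ≤ hausdorffMNC R + τ * ε' := step1
    _ ≤ (∑ i ∈ Finset.range n, Δ * g (t (i+1))) + τ * ε' := add_le_add step2 le_rfl
    _ ≤ ((∫ s in (0:ℝ)..τ, g s) + τ * ε') + τ * ε' := add_le_add step3 le_rfl
    _ = (∫ s in (0:ℝ)..τ, g s) + ε := by rw [add_assoc, hfinal]
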